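/- Every regular locally gyroscopic invariant paratopological gyrogroup G is completely regular, i.e. for every point x ∈ G and every open set U containing x there is a continuous function f : G → [0,1] with f(x) = 0 and f⁻¹([0,1)) ⊆ U. -/

import Mathlib

/-- A gyrogroup: a groupoid with identity, inverses, gyroautomorphisms
satisfying the gyroassociative law and the loop property. -/
structure Gyrogroup (G : Type*) where
  op : G → G → G
  e : G
  inv : G → G
  gyr : G → G → G → G
  op_e : ∀ x, op x e = x
  e_op : ∀ x, op e x = x
  op_inv : ∀ x, op x (inv x) = e
  inv_op : ∀ x, op (inv x) x = e
  gyr_bijective : ∀ a b, Function.Bijective (gyr a b)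
  gyr_hom : ∀ a b x y, gyr a b (op x y) = op (gyr a b x) (gyr a b y)
  gyrassoc : ∀ x y z, op x (op y z) = op (op x y) (gyr x y z)
  loop : ∀ x y, gyr (op x y) y = gyr x y

/-- The gyrogroup cooperation: a ⊞ b = a ⊕ gyr[a, ⊖b] b. -/
def Gyrogroup.coop {G : Type*} (gg : Gyrogroup G) (a b : G) : G :=
  gg.op a (gg.gyr a (gg.inv b) b)

/-- a ⊟ b = a ⊞ (⊖ b). -/
def Gyrogroup.boxminus {G : Type*} (gg : Gyrogroup G) (a b : G) : G :=
  gg.coop a (gg.inv b)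

namespace Gyrogroup

variable {G : Type*} (gg : Gyrogroup G)

lemma lcancel (a : G) : ∀ u v, gg.op a u = gg.op a v → u = v := by
  intro u v h
  have h2 : gg.op (gg.inv a) (gg.op a u) = gg.op (gg.inv a) (gg.op a v) := by rw [h]
  rw [gg.gyrassoc (gg.inv a) a u, gg.gyrassoc (gg.inv a) a v, gg.inv_op, gg.e_op, gg.e_op] at h2
  exact (gg.gyr_bijective (gg.inv a) a).injective h2

lemma gyr_ea (a z : G) : gg.gyr gg.e a z = z := by
  have h := gg.gyrassoc gg.e a z
  rw [gg.e_op, gg.e_op] at h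
  exact (gg.lcancel a _ _ h.symm)

lemma gyr_ia (a z : G) : gg.gyr (gg.inv a) a z = z := by
  have h := gg.loop (gg.inv a) a
  rw [gg.inv_op] at h
  rw [← h, gyr_ea]

lemma inv_op_op (a z : G) : gg.op (gg.inv a) (gg.op a z) = z := by
  rw [gg.gyrassoc, gg.inv_op, gg.e_op, gyr_ia]

lemma gyr_aia (a z : G) : gg.gyr a (gg.inv a) z = z := by
  have h := gg.loop a (gg.inv a)
  rw [gg.op_inv] at h
  rw [← h, gyr_ea]

lemma op_inv_op (a z : G) : gg.op a (gg.op (gg.inv a) z) = z := by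
  rw [gg.gyrassoc, gg.op_inv, gg.e_op, gyr_aia]

lemma gyr_cancel (a b z : G) : gg.gyr b (gg.op a b) (gg.gyr a b z) = z := by
  have h1 : gg.op (gg.inv a) (gg.op a (gg.op b z)) = gg.op b z := gg.inv_op_op a _
  rw [gg.gyrassoc a b z] at h1
  rw [gg.gyrassoc (gg.inv a) (gg.op a b) (gg.gyr a b z)] at h1
  rw [gg.inv_op_op a b] at h1
  have h2 := gg.lcancel b _ _ h1
  have h3 := gg.loop (gg.inv a) (gg.op a b)
  rw [gg.inv_op_op a b] at h3
  rw [h3, h2]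

lemma gyr_cancel' (a b w : G) : gg.gyr a b (gg.gyr b (gg.op a b) w) = w := by
  have h := gg.gyr_cancel a b (gg.gyr b (gg.op a b) w)
  exact (gg.gyr_bijective b (gg.op a b)).injective h

lemma reassoc (a v w : G) :
    gg.op (gg.op a v) w = gg.op a (gg.op v (gg.gyr v (gg.op a v) w)) := by
  rw [gg.gyrassoc a v (gg.gyr v (gg.op a v) w), gg.gyr_cancel' a v w]

end Gyrogroup

namespace Gyrogroup

variable {G : Type*} (gg : Gyrogroup G)

/-- Dyadic family of sets: `dyset V n k` corresponds to the dyadic rational `k / 2^n`. -/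
def dyset (V : ℕ → Set G) : ℕ → ℕ → Set G
  | 0, k => if k = 0 then {gg.e} else V 1
  | n+1, k => if k % 2 = 0 then dyset V n (k / 2)
              else Set.image2 gg.op (dyset V n (k / 2)) (V (n + 2))

variable (V : ℕ → Set G)

lemma dyset_succ (n k : ℕ) : gg.dyset V (n+1) k =
    if k % 2 = 0 then gg.dyset V n (k / 2)
    else Set.image2 gg.op (gg.dyset V n (k / 2)) (V (n + 2)) := rfl

lemma dyset_zero : ∀ n, gg.dyset V n 0 = {gg.e} := by
  intro n; induction n with
  | zero => simp [dyset]
  | succ n ih => rw [dyset_succ]; simp [ih]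

lemma image2_singleton_e (S : Set G) : Set.image2 gg.op {gg.e} S = S := by
  ext z
  constructor
  · rintro ⟨a, ha, b, hb, rfl⟩
    rcases ha with rfl
    rwa [gg.e_op]
  · intro hz
    exact ⟨gg.e, rfl, z, hz, gg.e_op z⟩

lemma dyset_one : ∀ n, gg.dyset V n 1 = V (n + 1) := by
  intro n; induction n with
  | zero => simp [dyset]
  | succ n _ =>
      rw [dyset_succ]
      norm_num
      rw [dyset_zero, image2_singleton_e]

lemma dyset_double (n k : ℕ) : gg.dyset V (n+1) (2 * k) = gg.dyset V n k := by
  rw [dyset_succ]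
  have h1 : (2*k) % 2 = 0 := by omega
  have h2 : (2*k) / 2 = k := by omega
  rw [if_pos h1, h2]

lemma dyset_lift (n k : ℕ) : ∀ m, gg.dyset V (n + m) (k * 2 ^ m) = gg.dyset V n k := by
  intro m; induction m with
  | zero => simp
  | succ m ih =>
      have h : k * 2 ^ (m+1) = 2 * (k * 2 ^ m) := by ring
      rw [show n + (m+1) = (n + m) + 1 from rfl, h, dyset_double, ih]

lemma dyset_top (n : ℕ) : gg.dyset V n (2 ^ n) = V 1 := by
  have := gg.dyset_lift V 0 1 n
  simpa [dyset] using this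

end Gyrogroup

namespace Gyrogroup

variable {G : Type*} (gg : Gyrogroup G) (V : ℕ → Set G) (U₀ : Set G)

section Step

variable (hVe : ∀ n, gg.e ∈ V n)
  (hVinv : ∀ n, ∀ a ∈ U₀, ∀ b ∈ U₀, gg.gyr a b '' V n ⊆ V n)
  (hVsq : ∀ n, Set.image2 gg.op (V (n+1)) (V (n+1)) ⊆ V n)
  (hV0 : V 0 ⊆ U₀)

include hVe in
lemma V_succ_le (hVsq : ∀ n, Set.image2 gg.op (V (n+1)) (V (n+1)) ⊆ V n) :
    ∀ n, V (n+1) ⊆ V n := by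
  intro n a ha
  have : gg.op a gg.e ∈ Set.image2 gg.op (V (n+1)) (V (n+1)) :=
    ⟨a, ha, gg.e, hVe (n+1), rfl⟩
  rw [gg.op_e] at this
  exact hVsq n this

include hVe hVsq in
lemma V_le : ∀ {m n : ℕ}, m ≤ n → V n ⊆ V m := by
  intro m n h
  induction n, h using Nat.le_induction with
  | base => exact subset_rfl
  | succ n h ih => exact (gg.V_succ_le V hVe hVsq n).trans ih

lemma mono_of_step {n : ℕ}
    (hstep : ∀ k < 2^n, Set.image2 gg.op (gg.dyset V n k) (V (n+1)) ⊆ gg.dyset V n (k+1))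
    (he : gg.e ∈ V (n+1)) :
    ∀ k l, k ≤ l → l ≤ 2^n → gg.dyset V n k ⊆ gg.dyset V n l := by
  intro k l hkl hl
  induction l, hkl using Nat.le_induction with
  | base => exact subset_rfl
  | succ l hkl ih =>
      intro a ha
      have ha' : a ∈ gg.dyset V n l := ih (by omega) ha
      have : gg.op a gg.e ∈ Set.image2 gg.op (gg.dyset V n l) (V (n+1)) :=
        ⟨a, ha', gg.e, he, rfl⟩
      rw [gg.op_e] at this
      exact hstep l (by omega) this

include hVe hVinv hVsq hV0 in
lemma dyset_step : ∀ n, ∀ k < 2^n,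
    Set.image2 gg.op (gg.dyset V n k) (V (n+1)) ⊆ gg.dyset V n (k+1) := by
  intro n
  induction n with
  | zero =>
      intro k hk
      have hk0 : k = 0 := by omega
      subst hk0
      rintro z hz
      have h0 : gg.dyset V 0 0 = {gg.e} := gg.dyset_zero V 0
      rw [h0, gg.image2_singleton_e] at hz
      have h1 : gg.dyset V 0 1 = V 1 := gg.dyset_one V 0
      rwa [h1]
  | succ n ih =>
      intro k hk
      have mono := gg.mono_of_step V (n := n) ih (hVe (n+1))
      have bound : ∀ j, j ≤ 2^n → gg.dyset V n j ⊆ V 1 := by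
        intro j hj
        refine (mono j (2^n) hj le_rfl).trans ?_
        rw [gg.dyset_top V n]
      rcases Nat.even_or_odd k with hev | hodd
      · obtain ⟨j, hj⟩ := hev
        have hkj : k = 2 * j := by omega
        subst hkj
        rw [gg.dyset_double V n j, gg.dyset_succ V n (2*j+1),
          if_neg (by omega : ¬ (2*j+1) % 2 = 0), show (2*j+1)/2 = j by omega]
      · obtain ⟨j, hj⟩ := hodd
        subst hj
        rw [gg.dyset_succ V n (2*j+1), if_neg (by omega : ¬ (2*j+1) % 2 = 0),
          show (2*j+1)/2 = j by omega,
          show 2*j+1+1 = 2*(j+1) by omega, gg.dyset_double V n (j+1)]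
        rintro z ⟨p, ⟨a, ha, v, hv, rfl⟩, w, hw, rfl⟩
        have hjlt : j < 2^n := by omega
        have haV1 : a ∈ V 1 := bound j (le_of_lt hjlt) ha
        have hv1 : v ∈ V 1 := gg.V_le V hVe hVsq (by omega) hv
        have hw1 : w ∈ V 1 := gg.V_le V hVe hVsq (by omega) hw
        have hvU : v ∈ U₀ := hV0 (gg.V_le V hVe hVsq (by omega) hv)
        have havU : gg.op a v ∈ U₀ := by
          refine hV0 (hVsq 0 ⟨a, haV1, v, hv1, rfl⟩)
        have hgw : gg.gyr v (gg.op a v) w ∈ V (n+2) :=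
          hVinv (n+2) v hvU _ havU ⟨w, hw, rfl⟩
        have hvg : gg.op v (gg.gyr v (gg.op a v) w) ∈ V (n+1) :=
          hVsq (n+1) ⟨v, hv, _, hgw, rfl⟩
        rw [gg.reassoc a v w]
        exact ih j hjlt ⟨a, ha, _, hvg, rfl⟩

include hVe hVinv hVsq hV0 in
lemma dyset_mono : ∀ n k l, k ≤ l → l ≤ 2^n → gg.dyset V n k ⊆ gg.dyset V n l :=
  fun n => gg.mono_of_step V (gg.dyset_step V U₀ hVe hVinv hVsq hV0 n) (hVe (n+1))

include hVe hVinv hVsq hV0 in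
lemma dyset_bound : ∀ n k, k ≤ 2^n → gg.dyset V n k ⊆ V 1 := by
  intro n k hk
  refine (gg.dyset_mono V U₀ hVe hVinv hVsq hV0 n k (2^n) hk le_rfl).trans ?_
  rw [gg.dyset_top V n]

include hVe hVinv hVsq hV0 in
lemma dyset_le_of_le {n k m l : ℕ} (h : k * 2^m ≤ l * 2^n) (hl : l ≤ 2^m) :
    gg.dyset V n k ⊆ gg.dyset V m l := by
  have e1 : gg.dyset V (n+m) (k * 2^m) = gg.dyset V n k := gg.dyset_lift V n k m
  have e2 : gg.dyset V (n+m) (l * 2^n) = gg.dyset V m l := by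
    rw [Nat.add_comm n m]; exact gg.dyset_lift V m l n
  rw [← e1, ← e2]
  refine gg.dyset_mono V U₀ hVe hVinv hVsq hV0 (n+m) _ _ h ?_
  calc l * 2^n ≤ 2^m * 2^n := Nat.mul_le_mul_right _ hl
    _ = 2^(n+m) := by rw [pow_add, Nat.mul_comm]

end Step

end Gyrogroup

namespace Gyrogroup

variable {G : Type*} [TopologicalSpace G] (gg : Gyrogroup G) (V : ℕ → Set G)

/-- The defining set for the Urysohn-type function. -/
def fset (y : G) : Set ℝ :=
  insert 1 {r | ∃ n k : ℕ, 1 ≤ k ∧ k ≤ 2^n ∧ r = (k:ℝ)/2^n ∧ y ∈ closure (gg.dyset V n k)}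

/-- The Urysohn-type function. -/
noncomputable def ffun (y : G) : ℝ := sInf (gg.fset V y)

lemma one_mem_fset (y : G) : (1:ℝ) ∈ gg.fset V y := Set.mem_insert 1 _

lemma fset_nonempty (y : G) : (gg.fset V y).Nonempty := ⟨1, gg.one_mem_fset V y⟩

lemma fset_bddBelow (y : G) : BddBelow (gg.fset V y) := by
  refine ⟨0, fun r hr => ?_⟩
  rcases hr with rfl | ⟨n, k, _, _, rfl, _⟩
  · norm_num
  · positivity

lemma ffun_le_one (y : G) : gg.ffun V y ≤ 1 :=
  csInf_le (gg.fset_bddBelow V y) (gg.one_mem_fset V y)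

lemma ffun_nonneg (y : G) : 0 ≤ gg.ffun V y := by
  refine le_csInf (gg.fset_nonempty V y) fun r hr => ?_
  rcases hr with rfl | ⟨n, k, _, _, rfl, _⟩
  · norm_num
  · positivity

lemma ffun_le (y : G) (n k : ℕ) (h1 : 1 ≤ k) (h2 : k ≤ 2^n)
    (hy : y ∈ closure (gg.dyset V n k)) : gg.ffun V y ≤ (k:ℝ)/2^n :=
  csInf_le (gg.fset_bddBelow V y) (Set.mem_insert_of_mem _ ⟨n, k, h1, h2, rfl, hy⟩)

lemma dyadic_btwn {c d : ℝ} (h0 : 0 ≤ c) (hcd : c < d) (hd : d ≤ 1) :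
    ∃ n k : ℕ, 1 ≤ k ∧ k ≤ 2^n ∧ c < (k:ℝ)/2^n ∧ (k:ℝ)/2^n < d := by
  obtain ⟨n, hn⟩ : ∃ n : ℕ, (1/2:ℝ)^n < d - c :=
    exists_pow_lt_of_lt_one (by linarith) (by norm_num)
  have h2n : (0:ℝ) < 2^n := by positivity
  refine ⟨n, ⌊c * 2^n⌋₊ + 1, by omega, ?_, ?_, ?_⟩
  · -- k ≤ 2^n, proved from k/2^n < d ≤ 1 later; prove directly:
    have hfl : (⌊c * 2^n⌋₊ : ℝ) ≤ c * 2^n := Nat.floor_le (by positivity)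
    have hlt : ((⌊c * 2^n⌋₊ + 1 : ℕ) : ℝ) ≤ d * 2^n := by
      push_cast
      have : (1/2:ℝ)^n * 2^n = 1 := by
        rw [← mul_pow]; norm_num
      nlinarith
    have hd2 : d * 2^n ≤ 2^n := by nlinarith
    have : ((⌊c * 2^n⌋₊ + 1 : ℕ) : ℝ) ≤ ((2^n : ℕ) : ℝ) := by push_cast at hlt ⊢; linarith
    exact_mod_cast this
  · rw [lt_div_iff₀ h2n]
    have := Nat.lt_floor_add_one (c * 2^n)
    push_cast
    linarith
  · rw [div_lt_iff₀ h2n]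
    have hfl : (⌊c * 2^n⌋₊ : ℝ) ≤ c * 2^n := Nat.floor_le (by positivity)
    have : (1/2:ℝ)^n * 2^n = 1 := by rw [← mul_pow]; norm_num
    push_cast
    nlinarith

lemma ffun_e (hVnh : ∀ n, V n ∈ nhds gg.e) : gg.ffun V gg.e = 0 := by
  have hle : ∀ n : ℕ, gg.ffun V gg.e ≤ (1:ℝ)/2^n := by
    intro n
    have he : gg.e ∈ gg.dyset V n 1 := by
      rw [gg.dyset_one V n]; exact mem_of_mem_nhds (hVnh (n+1))
    have := gg.ffun_le V gg.e n 1 le_rfl (Nat.one_le_two_pow) (subset_closure he)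
    simpa using this
  refine le_antisymm ?_ (gg.ffun_nonneg V gg.e)
  by_contra h
  push_neg at h
  obtain ⟨n, hn⟩ : ∃ n : ℕ, (1/2:ℝ)^n < gg.ffun V gg.e :=
    exists_pow_lt_of_lt_one h (by norm_num)
  have h12 : (1/2:ℝ)^n = 1/2^n := by rw [div_pow]; norm_num
  rw [h12] at hn
  nlinarith [hle n]

end Gyrogroup

namespace Gyrogroup

variable {G : Type*} [TopologicalSpace G] (gg : Gyrogroup G)

lemma at_e (hcont : Continuous fun p : G × G => gg.op p.1 p.2)
    (U₀ : Set G) (V : ℕ → Set G)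
    (hVnh : ∀ n, V n ∈ nhds gg.e)
    (hVinv : ∀ n, ∀ a ∈ U₀, ∀ b ∈ U₀, gg.gyr a b '' V n ⊆ V n)
    (hVsq : ∀ n, Set.image2 gg.op (V (n+1)) (V (n+1)) ⊆ V n)
    (hV0 : V 0 ⊆ U₀) :
    ∃ f : G → ℝ, Continuous f ∧ f gg.e = 0 ∧ (∀ y, f y ∈ Set.Icc (0:ℝ) 1) ∧
      ∀ y, f y < 1 → y ∈ closure (V 0) := by
  have hVe : ∀ n, gg.e ∈ V n := fun n => mem_of_mem_nhds (hVnh n)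
  -- lower bound: if z avoids the closure of a dyadic set, f z is at least the dyadic value
  have hflb : ∀ (n k : ℕ) (z : G), 1 ≤ k → k ≤ 2^n →
      z ∉ closure (gg.dyset V n k) → (k:ℝ)/2^n ≤ gg.ffun V z := by
    intro n k z h1 h2 hz
    refine le_csInf (gg.fset_nonempty V z) fun r hr => ?_
    rcases hr with rfl | ⟨m, l, hl1, hl2, rfl, hzl⟩
    · rw [div_le_one (by positivity)]
      exact_mod_cast h2
    · by_contra hlt
      push_neg at hlt
      have hnat : l * 2^n < k * 2^m := by
        have h2m : (0:ℝ) < 2^m := by positivity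
        have h2n : (0:ℝ) < 2^n := by positivity
        rw [div_lt_div_iff₀ h2m h2n] at hlt
        have : ((l * 2^n : ℕ) : ℝ) < ((k * 2^m : ℕ) : ℝ) := by push_cast; linarith
        exact_mod_cast this
      have hsub : gg.dyset V m l ⊆ gg.dyset V n k :=
        gg.dyset_le_of_le V U₀ hVe hVinv hVsq hV0 (le_of_lt hnat) h2
      exact hz (closure_mono hsub hzl)
  -- upper semicontinuity engine
  have husc : ∀ n k, k < 2^n → ∀ v ∈ V (n+1), ∀ y, y ∈ closure (gg.dyset V n k) →
      gg.op y v ∈ closure (gg.dyset V n (k+1)) := by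
    intro n k hk v hv y hy
    have hρ : Continuous fun z : G => gg.op z v :=
      hcont.comp (continuous_id.prodMk continuous_const)
    have h1 : gg.op y v ∈ (fun z => gg.op z v) '' closure (gg.dyset V n k) := ⟨y, hy, rfl⟩
    have h2 := image_closure_subset_closure_image hρ (s := gg.dyset V n k) h1
    refine closure_mono ?_ h2
    rintro _ ⟨a, ha, rfl⟩
    exact gg.dyset_step V U₀ hVe hVinv hVsq hV0 n k hk ⟨a, ha, v, hv, rfl⟩
  -- left-translated neighborhoods
  have hnhd : ∀ (y : G) (S : Set G), S ∈ nhds gg.e →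
      {z | gg.op (gg.inv y) z ∈ S} ∈ nhds y := by
    intro y S hS
    have hc : Continuous fun z : G => gg.op (gg.inv y) z :=
      hcont.comp (continuous_const.prodMk continuous_id)
    have he : gg.op (gg.inv y) y = gg.e := gg.inv_op y
    exact hc.continuousAt.preimage_mem_nhds (by rwa [he])
  refine ⟨gg.ffun V, ?_, gg.ffun_e V hVnh, fun y => ⟨gg.ffun_nonneg V y, gg.ffun_le_one V y⟩, ?_⟩
  · -- continuity
    refine continuous_iff_continuousAt.2 fun y => tendsto_order.2 ⟨?_, ?_⟩
    · -- lower: ∀ c < f y, eventually c < f z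
      intro c hc
      rcases lt_or_ge c 0 with hc0 | hc0
      · exact Filter.Eventually.of_forall fun z => lt_of_lt_of_le hc0 (gg.ffun_nonneg V z)
      · obtain ⟨n, k, h1, h2, hck, hkf⟩ :=
          dyadic_btwn (c := c) (d := gg.ffun V y) hc0 hc (gg.ffun_le_one V y)
        have hyn : y ∉ closure (gg.dyset V n k) := fun hmem =>
          absurd (gg.ffun_le V y n k h1 h2 hmem) (not_le.2 hkf)
        have hOmem : (closure (gg.dyset V n k))ᶜ ∈ nhds y :=
          (isClosed_closure.isOpen_compl).mem_nhds hyn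
        refine Filter.mem_of_superset hOmem fun z hz => ?_
        exact lt_of_lt_of_le hck (hflb n k z h1 h2 hz)
    · -- upper: ∀ c > f y, eventually f z < c
      intro c hc
      rcases lt_or_ge 1 c with hc1 | hc1
      · exact Filter.Eventually.of_forall fun z => lt_of_le_of_lt (gg.ffun_le_one V z) hc1
      · -- get a dyadic witness below c
        obtain ⟨r, hr, hrc⟩ := exists_lt_of_csInf_lt (gg.fset_nonempty V y) hc
        rcases hr with rfl | ⟨n, k, h1, h2, rfl, hyk⟩
        · exact absurd hrc (not_lt.2 hc1)
        · have hklt : k < 2^n := by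
            have : (k:ℝ)/2^n < 1 := lt_of_lt_of_le hrc hc1
            rw [div_lt_one (by positivity)] at this
            exact_mod_cast this
          obtain ⟨m', hm'⟩ : ∃ m' : ℕ, (1/2:ℝ)^m' < c - (k:ℝ)/2^n :=
            exists_pow_lt_of_lt_one (by linarith) (by norm_num)
          set m := max n m' with hm
          have hnm : n ≤ m := le_max_left _ _
          set K := k * 2^(m-n) with hK
          have hdyK : gg.dyset V m K = gg.dyset V n k := by
            rw [show m = n + (m-n) by omega]
            exact gg.dyset_lift V n k (m-n)
          have hKlt : K < 2^m := by
            have : k * 2^(m-n) < 2^n * 2^(m-n) :=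
              Nat.mul_lt_mul_of_lt_of_le hklt le_rfl (by positivity)
            calc K < 2^n * 2^(m-n) := this
              _ = 2^m := by rw [← pow_add]; congr 1; omega
          have hyK : y ∈ closure (gg.dyset V m K) := by rw [hdyK]; exact hyk
          refine Filter.mem_of_superset (hnhd y (V (m+1)) (hVnh (m+1))) fun z hz => ?_
          have hzy : z = gg.op y (gg.op (gg.inv y) z) := (gg.op_inv_op y z).symm
          have hcl : z ∈ closure (gg.dyset V m (K+1)) := by
            rw [hzy]
            exact husc m K hKlt _ hz y hyK
          have hle := gg.ffun_le V z m (K+1) (by omega) (by omega) hcl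
          refine lt_of_le_of_lt hle ?_
          -- ((K+1):ℝ)/2^m < c
          have h2m : (0:ℝ) < 2^m := by positivity
          have h2n : (0:ℝ) < 2^n := by positivity
          have hsplit : ((K+1:ℕ):ℝ)/2^m = (k:ℝ)/2^n + 1/2^m := by
            have hpow : (2:ℝ)^m = 2^n * 2^(m-n) := by
              rw [← pow_add]; congr 1; omega
            push_cast [hK]
            rw [hpow]
            have h2mn : (0:ℝ) < 2^(m-n) := by positivity
            field_simp
          rw [hsplit]
          have hhalf : (1:ℝ)/2^m ≤ (1/2:ℝ)^m' := by
            have : (1/2:ℝ)^m = 1/2^m := by rw [div_pow]; norm_num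
            rw [← this]
            exact pow_le_pow_of_le_one (by norm_num) (by norm_num) (le_max_right _ _)
          linarith
  · -- final: f y < 1 → y ∈ closure (V 0)
    intro y hy
    obtain ⟨r, hr, hr1⟩ := exists_lt_of_csInf_lt (gg.fset_nonempty V y) hy
    rcases hr with rfl | ⟨n, k, h1, h2, rfl, hyk⟩
    · exact absurd hr1 (lt_irrefl 1)
    · have hsub : gg.dyset V n k ⊆ V 0 :=
        (gg.dyset_bound V U₀ hVe hVinv hVsq hV0 n k h2).trans
          (gg.V_succ_le V hVe hVsq 0)
      exact closure_mono hsub hyk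

end Gyrogroup

namespace Gyrogroup

variable {G : Type*} [TopologicalSpace G] (gg : Gyrogroup G)

lemma exists_seq (hcont : Continuous fun p : G × G => gg.op p.1 p.2)
    (B : Set (Set G)) (hB1 : ∀ S ∈ B, S ∈ nhds gg.e)
    (hB2 : ∀ W ∈ nhds gg.e, ∃ S ∈ B, S ⊆ W)
    (W₁ : Set G) (hW₁ : W₁ ∈ nhds gg.e) :
    ∃ V : ℕ → Set G, (∀ n, V n ∈ B) ∧ V 0 ⊆ W₁ ∧
      ∀ n, Set.image2 gg.op (V (n+1)) (V (n+1)) ⊆ V n := by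
  have sq : ∀ S ∈ nhds gg.e, ∃ T, T ∈ B ∧ Set.image2 gg.op T T ⊆ S := by
    intro S hS
    have hca : ContinuousAt (fun p : G × G => gg.op p.1 p.2) (gg.e, gg.e) :=
      hcont.continuousAt
    have hee : gg.op gg.e gg.e = gg.e := gg.op_e gg.e
    have hpre : (fun p : G × G => gg.op p.1 p.2) ⁻¹' S ∈ nhds (gg.e, gg.e) :=
      hca.preimage_mem_nhds (by rwa [hee])
    rw [nhds_prod_eq] at hpre
    obtain ⟨M1, hM1, M2, hM2, hsub⟩ := Filter.mem_prod_iff.1 hpre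
    obtain ⟨T, hTB, hTM⟩ := hB2 (M1 ∩ M2) (Filter.inter_mem hM1 hM2)
    refine ⟨T, hTB, ?_⟩
    rintro _ ⟨a, ha, b, hb, rfl⟩
    exact hsub (show (a,b) ∈ M1 ×ˢ M2 from ⟨(hTM ha).1, (hTM hb).2⟩)
  have sq' : ∀ p : {S : Set G // S ∈ B}, ∃ T, T ∈ B ∧
      Set.image2 gg.op T T ⊆ p.1 := fun p => sq p.1 (hB1 p.1 p.2)
  choose nxt hnb hnsq using sq'
  obtain ⟨T0, hT0B, hT0W⟩ := hB2 W₁ hW₁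
  let F : ℕ → {S : Set G // S ∈ B} :=
    fun n => Nat.rec ⟨T0, hT0B⟩ (fun _ p => ⟨nxt p, hnb p⟩) n
  refine ⟨fun n => (F n).1, fun n => (F n).2, hT0W, fun n => ?_⟩
  exact hnsq (F n)

end Gyrogroup

theorem stmt_1_aux {G : Type*} [TopologicalSpace G] (gg : Gyrogroup G)
    (hcont : Continuous fun p : G × G => gg.op p.1 p.2)
    (hlgi : ∃ (B : Set (Set G)) (U : Set G),
      (∀ V ∈ B, V ∈ nhds gg.e) ∧ (∀ W ∈ nhds gg.e, ∃ V ∈ B, V ⊆ W) ∧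
      IsOpen U ∧ gg.e ∈ U ∧
      ∀ V ∈ B, ∀ a ∈ U, ∀ b ∈ U, gg.gyr a b '' V ⊆ V)
    (hreg : ∀ (x : G) (U : Set G), IsOpen U → x ∈ U →
      ∃ V ∈ nhds x, closure V ⊆ U) :
    ∀ (x : G) (U : Set G), IsOpen U → x ∈ U →
      ∃ f : G → ℝ, Continuous f ∧ f x = 0 ∧ (∀ y, f y ∈ Set.Icc (0:ℝ) 1) ∧
        f ⁻¹' Set.Ico (0:ℝ) 1 ⊆ U := by
  intro x U hU hxU
  obtain ⟨B, U₀, hB1, hB2, hU₀o, hU₀e, hBinv⟩ := hlgi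
  have hlamx : Continuous fun z : G => gg.op x z :=
    hcont.comp (continuous_const.prodMk continuous_id)
  set W : Set G := (fun z : G => gg.op x z) ⁻¹' U with hWdef
  have hWo : IsOpen W := hU.preimage hlamx
  have hWe : gg.e ∈ W := by
    show gg.op x gg.e ∈ U
    rwa [gg.op_e]
  obtain ⟨W₁, hW₁n, hW₁cl⟩ := hreg gg.e (W ∩ U₀) (hWo.inter hU₀o) ⟨hWe, hU₀e⟩
  obtain ⟨V, hVB, hV0W1, hVsq⟩ := gg.exists_seq hcont B hB1 hB2 W₁ hW₁n
  have hVnh : ∀ n, V n ∈ nhds gg.e := fun n => hB1 _ (hVB n)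
  have hVinv : ∀ n, ∀ a ∈ U₀, ∀ b ∈ U₀, gg.gyr a b '' V n ⊆ V n :=
    fun n a ha b hb => hBinv _ (hVB n) a ha b hb
  have hV0U₀ : V 0 ⊆ U₀ := fun s hs => (hW₁cl (subset_closure (hV0W1 hs))).2
  obtain ⟨g, hgc, hge, hgIcc, hgW⟩ := gg.at_e hcont U₀ V hVnh hVinv hVsq hV0U₀
  refine ⟨fun y => g (gg.op (gg.inv x) y),
    hgc.comp (hcont.comp (continuous_const.prodMk continuous_id)), ?_, fun y => hgIcc _, ?_⟩
  · show g (gg.op (gg.inv x) x) = 0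
    rw [gg.inv_op x, hge]
  · intro y hy
    have h1 : gg.op (gg.inv x) y ∈ closure (V 0) := hgW _ hy.2
    have h2 : gg.op (gg.inv x) y ∈ W := by
      have : closure (V 0) ⊆ closure W₁ := closure_mono hV0W1
      exact (hW₁cl (this h1)).1
    have h3 : gg.op x (gg.op (gg.inv x) y) ∈ U := h2
    rwa [gg.op_inv_op x y] at h3

/-- Every regular locally gyroscopic invariant paratopological
gyrogroup is completely regular. -/
theorem stmt_1 {G : Type*} [TopologicalSpace G] (gg : Gyrogroup G)
    (hcont : Continuous fun p : G × G => gg.op p.1 p.2)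
    (hlgi : ∃ (B : Set (Set G)) (U : Set G),
      (∀ V ∈ B, V ∈ nhds gg.e) ∧ (∀ W ∈ nhds gg.e, ∃ V ∈ B, V ⊆ W) ∧
      IsOpen U ∧ gg.e ∈ U ∧
      ∀ V ∈ B, ∀ a ∈ U, ∀ b ∈ U, gg.gyr a b '' V ⊆ V)
    (hreg : ∀ (x : G) (U : Set G), IsOpen U → x ∈ U →
      ∃ V ∈ nhds x, closure V ⊆ U) :
    ∀ (x : G) (U : Set G), IsOpen U → x ∈ U →
      ∃ f : G → ℝ, Continuous f ∧ f x = 0 ∧ (∀ y, f y ∈ Set.Icc (0:ℝ) 1) ∧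
        f ⁻¹' Set.Ico (0:ℝ) 1 ⊆ U := by
  exact stmt_1_aux gg hcont hlgi hreg
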